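/- arXiv:2306.10603 — 3 statements merged into one kernel-verified Lean document; each statement's English description precedes it below -/
import Mathlib

section
/- For the decomposition of the one-dimensional Fermi-Hubbard Hamiltonian, [H_1, [H_2, H_1]] = 2v³ Σ_{i∈Λ'} Σ_{σ∈{↑,↓}} ( h_{i−2,i+1,σ} − h_{i−1,i,σ} ), and [H_2, [H_2, H_1]] = 2v³ Σ_{i∈Λ'} Σ_{σ∈{↑,↓}} ( h_{i,i+1,σ} − h_{i−1,i+2,σ} ). -/
/-- The hopping term `h_{ijσ} = a_{iσ}† a_{jσ} + a_{jσ}† a_{iσ}`. -/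
noncomputable def hop {E : Type*} [NormedAddCommGroup E] [InnerProductSpace ℂ E]
    [CompleteSpace E] {Λ : Type*} (a : Λ → Bool → E →L[ℂ] E) (i j : Λ) (σ : Bool) :
    E →L[ℂ] E :=
  star (a i σ) * a j σ + star (a j σ) * a i σ

/-- The signed hopping term `h̃_{ijσ} = a_{iσ}† a_{jσ} − a_{jσ}† a_{iσ}`. -/
noncomputable def shop {E : Type*} [NormedAddCommGroup E] [InnerProductSpace ℂ E]
    [CompleteSpace E] {Λ : Type*} (a : Λ → Bool → E →L[ℂ] E) (i j : Λ) (σ : Bool) :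
    E →L[ℂ] E :=
  star (a i σ) * a j σ - star (a j σ) * a i σ

/-- The number operator `n_{iσ} = a_{iσ}† a_{iσ}`. -/
noncomputable def num {E : Type*} [NormedAddCommGroup E] [InnerProductSpace ℂ E]
    [CompleteSpace E] {Λ : Type*} (a : Λ → Bool → E →L[ℂ] E) (i : Λ) (σ : Bool) :
    E →L[ℂ] E :=
  star (a i σ) * a i σ

/-- The "even-odd" kinetic term `H₁ = v Σ_{i∈Λ'} Σ_σ h_{i,i+1,σ}` of the one-dimensional
Fermi-Hubbard Hamiltonian, with `Λ' = {0, 2, …, L−2} ⊂ ℤ/Lℤ` and spin `↑ = true`, `↓ = false`. -/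
noncomputable def FH1 {E : Type*} [NormedAddCommGroup E] [InnerProductSpace ℂ E]
    [CompleteSpace E] {L : ℕ} (a : ZMod L → Bool → E →L[ℂ] E) (v : ℝ) : E →L[ℂ] E :=
  (v : ℂ) • ∑ i ∈ Finset.range (L / 2), ∑ σ : Bool,
    hop a ((2 * i : ℕ) : ZMod L) (((2 * i : ℕ) : ZMod L) + 1) σ

/-- The "odd-even" kinetic term `H₂ = v Σ_{i∈Λ'} Σ_σ h_{i−1,i,σ}`. -/
noncomputable def FH2 {E : Type*} [NormedAddCommGroup E] [InnerProductSpace ℂ E]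
    [CompleteSpace E] {L : ℕ} (a : ZMod L → Bool → E →L[ℂ] E) (v : ℝ) : E →L[ℂ] E :=
  (v : ℂ) • ∑ i ∈ Finset.range (L / 2), ∑ σ : Bool,
    hop a (((2 * i : ℕ) : ZMod L) - 1) ((2 * i : ℕ) : ZMod L) σ

/-- The interaction term `H₃ = u Σ_{i∈Λ'} (n_{i↑}n_{i↓} + n_{i+1,↑}n_{i+1,↓})`. -/
noncomputable def FH3 {E : Type*} [NormedAddCommGroup E] [InnerProductSpace ℂ E]
    [CompleteSpace E] {L : ℕ} (a : ZMod L → Bool → E →L[ℂ] E) (u : ℝ) : E →L[ℂ] E :=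
  (u : ℂ) • ∑ i ∈ Finset.range (L / 2),
    (num a ((2 * i : ℕ) : ZMod L) true * num a ((2 * i : ℕ) : ZMod L) false +
      num a (((2 * i : ℕ) : ZMod L) + 1) true * num a (((2 * i : ℕ) : ZMod L) + 1) false)

noncomputable section


-- ### auxiliary general lemmas

theorem comm_bb {E : Type*} [NormedAddCommGroup E] [InnerProductSpace ℂ E] [CompleteSpace E]
    {Λ : Type*} [DecidableEq Λ] (a : Λ → Bool → E →L[ℂ] E)
    (car1 : ∀ (i j : Λ) (σ τ : Bool), a i σ * a j τ + a j τ * a i σ = 0)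
    (car2 : ∀ (i j : Λ) (σ τ : Bool),
      a i σ * star (a j τ) + star (a j τ) * a i σ = if i = j ∧ σ = τ then 1 else 0)
    (i j k l : Λ) (σ τ : Bool) :
    ⁅star (a i σ) * a j σ, star (a k τ) * a l τ⁆ =
      (if σ = τ ∧ j = k then star (a i σ) * a l τ else 0)
      - (if τ = σ ∧ l = i then star (a k τ) * a j σ else 0) := by
  have e1 : a j σ * star (a k τ) = (if σ = τ ∧ j = k then 1 else 0) - star (a k τ) * a j σ := by
    rw [eq_sub_of_add_eq (car2 j k σ τ),
      if_congr (show (j = k ∧ σ = τ) ↔ (σ = τ ∧ j = k) from and_comm) rfl rfl]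
  have e2 : a l τ * star (a i σ) = (if τ = σ ∧ l = i then 1 else 0) - star (a i σ) * a l τ := by
    rw [eq_sub_of_add_eq (car2 l i τ σ),
      if_congr (show (l = i ∧ τ = σ) ↔ (τ = σ ∧ l = i) from and_comm) rfl rfl]
  have e3 : star (a i σ) * star (a k τ) = - (star (a k τ) * star (a i σ)) := by
    have h := congrArg star (car1 k i τ σ)
    simp only [star_add, star_mul, star_zero] at h
    exact eq_neg_of_add_eq_zero_left h
  have e4 : a j σ * a l τ = - (a l τ * a j σ) :=
    eq_neg_of_add_eq_zero_left (car1 j l σ τ)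
  have hXY : (star (a i σ) * a j σ) * (star (a k τ) * a l τ)
      = (if σ = τ ∧ j = k then star (a i σ) * a l τ else 0)
        - star (a k τ) * star (a i σ) * (a l τ * a j σ) := by
    calc (star (a i σ) * a j σ) * (star (a k τ) * a l τ)
        = star (a i σ) * (a j σ * star (a k τ)) * a l τ := by noncomm_ring
      _ = star (a i σ) * ((if σ = τ ∧ j = k then 1 else 0) - star (a k τ) * a j σ) * a l τ := by
          rw [e1]
      _ = (if σ = τ ∧ j = k then star (a i σ) * a l τ else 0)
          - star (a i σ) * star (a k τ) * (a j σ * a l τ) := by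
          split <;> noncomm_ring
      _ = _ := by rw [e3, e4]; noncomm_ring
  have hYX : (star (a k τ) * a l τ) * (star (a i σ) * a j σ)
      = (if τ = σ ∧ l = i then star (a k τ) * a j σ else 0)
        - star (a k τ) * star (a i σ) * (a l τ * a j σ) := by
    calc (star (a k τ) * a l τ) * (star (a i σ) * a j σ)
        = star (a k τ) * (a l τ * star (a i σ)) * a j σ := by noncomm_ring
      _ = star (a k τ) * ((if τ = σ ∧ l = i then 1 else 0) - star (a i σ) * a l τ) * a j σ := by
          rw [e2]
      _ = _ := by split <;> noncomm_ring
  rw [Ring.lie_def, hXY, hYX]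
  abel

lemma lie_sum' {R ι : Type*} [Ring R] (s : Finset ι) (f : ι → R) (x : R) :
    ⁅x, ∑ i ∈ s, f i⁆ = ∑ i ∈ s, ⁅x, f i⁆ := by
  simp [Ring.lie_def, Finset.mul_sum, Finset.sum_mul, Finset.sum_sub_distrib]

lemma sum_lie' {R ι : Type*} [Ring R] (s : Finset ι) (f : ι → R) (x : R) :
    ⁅∑ i ∈ s, f i, x⁆ = ∑ i ∈ s, ⁅f i, x⁆ := by
  simp [Ring.lie_def, Finset.mul_sum, Finset.sum_mul, Finset.sum_sub_distrib]

lemma add_lie_r {R : Type*} [Ring R] (x y z : R) : ⁅x + y, z⁆ = ⁅x, z⁆ + ⁅y, z⁆ := by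
  simp only [Ring.lie_def, add_mul, mul_add]; abel

lemma lie_add_r {R : Type*} [Ring R] (x y z : R) : ⁅x, y + z⁆ = ⁅x, y⁆ + ⁅x, z⁆ := by
  simp only [Ring.lie_def, add_mul, mul_add]; abel

lemma sub_lie_r {R : Type*} [Ring R] (x y z : R) : ⁅x - y, z⁆ = ⁅x, z⁆ - ⁅y, z⁆ := by
  simp only [Ring.lie_def, sub_mul, mul_sub]; abel

lemma lie_sub_r {R : Type*} [Ring R] (x y z : R) : ⁅x, y - z⁆ = ⁅x, y⁆ - ⁅x, z⁆ := by
  simp only [Ring.lie_def, sub_mul, mul_sub]; abel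

lemma smul_lie_op {R A : Type*} [CommRing R] [Ring A] [Algebra R A] (c : R) (x y : A) :
    ⁅c • x, y⁆ = c • ⁅x, y⁆ := by
  rw [Ring.lie_def, Ring.lie_def, smul_mul_assoc, mul_smul_comm, smul_sub]

lemma lie_smul_op {R A : Type*} [CommRing R] [Ring A] [Algebra R A] (c : R) (x y : A) :
    ⁅x, c • y⁆ = c • ⁅x, y⁆ := by
  rw [Ring.lie_def, Ring.lie_def, smul_mul_assoc, mul_smul_comm, smul_sub]

-- ### the embedding

def emb (n : ℕ) : ZMod n →+ ZMod (2 * n) :=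
  ZMod.lift n ⟨{ toFun := fun x => 2 * (x : ZMod (2 * n)),
                 map_zero' := by simp,
                 map_add' := by intro x y; push_cast; ring }, by
    simp only [AddMonoidHom.coe_mk, ZeroHom.coe_mk]
    push_cast
    rw [show ((2 : ZMod (2*n)) * (n : ZMod (2*n))) = ((2 * n : ℕ) : ZMod (2*n)) by push_cast; ring,
      ZMod.natCast_self]⟩

lemma emb_intCast (n : ℕ) (x : ℤ) : emb n (x : ZMod n) = 2 * (x : ZMod (2 * n)) :=
  ZMod.lift_coe n _ x

lemma emb_natCast (n : ℕ) (i : ℕ) : emb n (i : ZMod n) = ((2 * i : ℕ) : ZMod (2 * n)) := by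
  have h := emb_intCast n (i : ℤ)
  push_cast at h ⊢
  exact h

lemma emb_val {n : ℕ} [NeZero n] (k : ZMod n) : (emb n k).val = 2 * k.val := by
  have h1 : emb n k = ((2 * k.val : ℕ) : ZMod (2 * n)) := by
    conv_lhs => rw [← ZMod.natCast_rightInverse k]
    exact emb_natCast n k.val
  have : NeZero (2 * n) := ⟨by have := NeZero.ne n; omega⟩
  rw [h1, ZMod.val_cast_of_lt]
  have := ZMod.val_lt k
  omega

lemma emb_inj {n : ℕ} [NeZero n] : Function.Injective (emb n) := by
  intro k k' h
  have h2 := congrArg ZMod.val h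
  rw [emb_val, emb_val] at h2
  exact ZMod.val_injective _ (by omega)

lemma emb_eq_iff {n : ℕ} [NeZero n] (k k' : ZMod n) : emb n k = emb n k' ↔ k = k' :=
  emb_inj.eq_iff

lemma emb_succ {n : ℕ} (k : ZMod n) : emb n (k + 1) = emb n k + 2 := by
  rw [map_add]
  congr 1
  have := emb_intCast n 1
  simpa using this

lemma emb_par {n : ℕ} [NeZero n] (k : ZMod n) :
    (ZMod.castHom ⟨n, rfl⟩ (ZMod 2)) (emb n k) = 0 := by
  conv_lhs => rw [← ZMod.natCast_rightInverse k, emb_natCast]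
  rw [map_natCast]
  push_cast
  rw [show ((2 : ZMod 2) * (k.val : ZMod 2)) = 0 by
    rw [show (2 : ZMod 2) = 0 by decide]; ring]

lemma emb_add_one_ne {n : ℕ} [NeZero n] (k k' : ZMod n) : (emb n k + 1 = emb n k') ↔ False := by
  simp only [iff_false]
  intro h
  have h2 := congrArg (ZMod.castHom ⟨n, rfl⟩ (ZMod 2)) h
  rw [map_add, map_one, emb_par, emb_par, zero_add] at h2
  exact one_ne_zero h2

lemma emb_ne_add_one {n : ℕ} [NeZero n] (k k' : ZMod n) : (emb n k = emb n k' + 1) ↔ False := by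
  rw [eq_comm]
  exact emb_add_one_ne k' k

lemma sum_range_zmod {M : Type*} [AddCommMonoid M] {n : ℕ} [NeZero n] (F : ZMod n → M) :
    ∑ i ∈ Finset.range n, F ((i : ℕ) : ZMod n) = ∑ k : ZMod n, F k := by
  apply Finset.sum_nbij' (fun i => ((i : ℕ) : ZMod n)) (fun k => k.val)
  · intro x _; exact Finset.mem_univ _
  · intro k _; exact Finset.mem_range.mpr (ZMod.val_lt k)
  · intro i hi; exact ZMod.val_cast_of_lt (Finset.mem_range.mp hi)
  · intro k _; exact ZMod.natCast_rightInverse k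
  · intro i _; rfl

lemma sum_shift {M : Type*} [AddCommMonoid M] {n : ℕ} [NeZero n] (F : ZMod n → M) (c : ZMod n) :
    ∑ k : ZMod n, F (k + c) = ∑ k : ZMod n, F k :=
  Fintype.sum_equiv (Equiv.addRight c) _ _ (fun _ => rfl)


lemma emb_sub_one_ne {n : ℕ} [NeZero n] (k k' : ZMod n) : (emb n k - 1 = emb n k') ↔ False := by
  rw [sub_eq_iff_eq_add]
  exact emb_ne_add_one k k'

lemma emb_ne_sub_one {n : ℕ} [NeZero n] (k k' : ZMod n) : (emb n k = emb n k' - 1) ↔ False := by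
  rw [eq_comm]
  exact emb_sub_one_ne k' k

lemma succ_eq_iff {m : ℕ} (c k : ZMod m) : (k + 1 = c) ↔ (k = c - 1) := by
  constructor
  · intro h; exact eq_sub_of_add_eq h
  · intro h; rw [h, sub_add_cancel]

lemma eq_succ_iff {m : ℕ} (c k : ZMod m) : (c = k + 1) ↔ (c - 1 = k) := by
  rw [eq_comm, succ_eq_iff, eq_comm]


lemma sum_ite_sub {m : ℕ} [NeZero m] {M : Type*}
    [AddCommMonoid M] (c : ZMod m) (f : ZMod m → M) :
    (∑ x : ZMod m, if c = x - 1 then f x else 0) = f (c + 1) := by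
  have h : ∀ x : ZMod m, (c = x - 1) = (c + 1 = x) := fun x =>
    propext ⟨fun h => by rw [h, sub_add_cancel], fun h => by rw [← h, add_sub_cancel_right]⟩
  simp only [h, Finset.sum_ite_eq, Finset.mem_univ, if_true]

lemma sum_ite_sub' {m : ℕ} [NeZero m] {M : Type*}
    [AddCommMonoid M] (c : ZMod m) (f : ZMod m → M) :
    (∑ x : ZMod m, if x - 1 = c then f x else 0) = f (c + 1) := by
  have h : ∀ x : ZMod m, (x - 1 = c) = (x = c + 1) := fun x =>
    propext ⟨fun h => by rw [← h, sub_add_cancel], fun h => by rw [h, add_sub_cancel_right]⟩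
  simp only [h, Finset.sum_ite_eq', Finset.mem_univ, if_true]

-- ### rewriting the Hamiltonians

section main
variable {E : Type*} [NormedAddCommGroup E] [InnerProductSpace ℂ E] [CompleteSpace E]
variable {n : ℕ} [NeZero n] (a : ZMod (2 * n) → Bool → E →L[ℂ] E) (v : ℝ)

lemma FH1_eq : FH1 a v = (v : ℂ) • ∑ k : ZMod n, ∑ σ : Bool,
    hop a (emb n k) (emb n k + 1) σ := by
  rw [FH1]
  congr 1
  rw [show (2 * n / 2) = n from Nat.mul_div_cancel_left n (by norm_num),
    ← sum_range_zmod (fun k => ∑ σ : Bool, hop a (emb n k) (emb n k + 1) σ)]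
  refine Finset.sum_congr rfl fun i _ => ?_
  rw [emb_natCast]

lemma FH2_eq : FH2 a v = (v : ℂ) • ∑ k : ZMod n, ∑ σ : Bool,
    hop a (emb n k + 1) (emb n (k + 1)) σ := by
  rw [FH2]
  congr 1
  rw [show (2 * n / 2) = n from Nat.mul_div_cancel_left n (by norm_num)]
  calc ∑ i ∈ Finset.range n, ∑ σ : Bool, hop a (((2*i : ℕ) : ZMod (2*n)) - 1) ((2*i : ℕ) : ZMod (2*n)) σ
      = ∑ i ∈ Finset.range n,
          (fun k : ZMod n => ∑ σ : Bool, hop a (emb n k - 1) (emb n k) σ) ((i : ℕ) : ZMod n) := by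
        refine Finset.sum_congr rfl fun i _ => ?_
        simp only [emb_natCast]
    _ = ∑ k : ZMod n, ∑ σ : Bool, hop a (emb n k - 1) (emb n k) σ :=
        sum_range_zmod (fun k => ∑ σ : Bool, hop a (emb n k - 1) (emb n k) σ)
    _ = ∑ k : ZMod n, ∑ σ : Bool, hop a (emb n (k + 1) - 1) (emb n (k + 1)) σ :=
        (sum_shift (fun k => ∑ σ : Bool, hop a (emb n k - 1) (emb n k) σ) 1).symm
    _ = ∑ k : ZMod n, ∑ σ : Bool, hop a (emb n k + 1) (emb n (k + 1)) σ := by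
        refine Finset.sum_congr rfl fun k _ => Finset.sum_congr rfl fun σ _ => ?_
        rw [emb_succ]
        congr 1
        ring

set_option maxHeartbeats 1000000 in
lemma comm21
    (car1 : ∀ (i j : ZMod (2 * n)) (σ τ : Bool), a i σ * a j τ + a j τ * a i σ = 0)
    (car2 : ∀ (i j : ZMod (2 * n)) (σ τ : Bool),
      a i σ * star (a j τ) + star (a j τ) * a i σ = if i = j ∧ σ = τ then 1 else 0) : ⁅FH2 a v, FH1 a v⁆ = ((v:ℂ)^2) • ∑ k : ZMod n, ∑ σ : Bool,
    (star (a (emb n k + 1) σ) * a (emb n (k+1) + 1) σ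
     - star (a (emb n k) σ) * a (emb n (k+1)) σ
     + star (a (emb n (k+1)) σ) * a (emb n k) σ
     - star (a (emb n (k+1) + 1) σ) * a (emb n k + 1) σ) := by
  rw [FH1_eq a v, FH2_eq a v, smul_lie_op, lie_smul_op, smul_smul, ← sq]
  congr 1
  simp only [sum_lie', lie_sum', hop, add_lie_r, lie_add_r, comm_bb a car1 car2]
  simp only [emb_eq_iff, emb_add_one_ne, emb_ne_add_one, emb_sub_one_ne, emb_ne_sub_one,
    succ_eq_iff, eq_succ_iff, add_left_inj, sub_add_cancel, add_sub_cancel_right,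
    and_false, false_and, and_true, true_and, if_false, ite_and,
    Finset.sum_sub_distrib, Finset.sum_add_distrib,
    Finset.sum_ite_eq, Finset.sum_ite_eq', Finset.mem_univ, if_true, Finset.sum_const_zero]
  have h1 : (∑ x : ZMod n, ∑ σ : Bool, star (a (emb n (x - 1) + 1) σ) * a (emb n x + 1) σ)
      = ∑ x : ZMod n, ∑ σ : Bool, star (a (emb n x + 1) σ) * a (emb n (x + 1) + 1) σ := by
    rw [← sum_shift (fun x => ∑ σ : Bool, star (a (emb n (x - 1) + 1) σ) * a (emb n x + 1) σ) 1]
    refine Finset.sum_congr rfl fun k _ => ?_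
    simp [add_sub_cancel_right]
  have h2 : (∑ x : ZMod n, ∑ σ : Bool, star (a (emb n x + 1) σ) * a (emb n (x - 1) + 1) σ)
      = ∑ x : ZMod n, ∑ σ : Bool, star (a (emb n (x + 1) + 1) σ) * a (emb n x + 1) σ := by
    rw [← sum_shift (fun x => ∑ σ : Bool, star (a (emb n x + 1) σ) * a (emb n (x - 1) + 1) σ) 1]
    refine Finset.sum_congr rfl fun k _ => ?_
    simp [add_sub_cancel_right]
  rw [h1, h2]
  abel

set_option maxHeartbeats 1000000 in
lemma comm121
    (car1 : ∀ (i j : ZMod (2 * n)) (σ τ : Bool), a i σ * a j τ + a j τ * a i σ = 0)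
    (car2 : ∀ (i j : ZMod (2 * n)) (σ τ : Bool),
      a i σ * star (a j τ) + star (a j τ) * a i σ = if i = j ∧ σ = τ then 1 else 0) :
    ⁅FH1 a v, ⁅FH2 a v, FH1 a v⁆⁆ = (2 * (v:ℂ)^3) • ∑ k : ZMod n, ∑ σ : Bool,
      (hop a (emb n k) (emb n (k+1) + 1) σ - hop a (emb n k + 1) (emb n (k+1)) σ) := by
  rw [comm21 a v car1 car2, FH1_eq a v, smul_lie_op, lie_smul_op, smul_smul,
    show ((v:ℂ) * (v:ℂ)^2) = (v:ℂ)^3 from by ring,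
    show (2 * (v:ℂ)^3) = (v:ℂ)^3 * 2 from by ring, mul_smul]
  congr 1
  rw [two_smul]
  simp only [hop, sum_lie', lie_sum', add_lie_r, lie_add_r, sub_lie_r, lie_sub_r,
    comm_bb a car1 car2]
  simp only [emb_eq_iff, emb_add_one_ne, emb_ne_add_one, emb_sub_one_ne, emb_ne_sub_one,
    succ_eq_iff, eq_succ_iff, add_left_inj, sub_add_cancel, add_sub_cancel_right,
    and_false, false_and, and_true, true_and, if_false, ite_and,
    Finset.sum_sub_distrib, Finset.sum_add_distrib,
    Finset.sum_ite_eq, Finset.sum_ite_eq', Finset.mem_univ, if_true, Finset.sum_const_zero,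
    sum_ite_sub, sum_ite_sub']
  abel

set_option maxHeartbeats 1000000 in
lemma comm221
    (car1 : ∀ (i j : ZMod (2 * n)) (σ τ : Bool), a i σ * a j τ + a j τ * a i σ = 0)
    (car2 : ∀ (i j : ZMod (2 * n)) (σ τ : Bool),
      a i σ * star (a j τ) + star (a j τ) * a i σ = if i = j ∧ σ = τ then 1 else 0) :
    ⁅FH2 a v, ⁅FH2 a v, FH1 a v⁆⁆ = (2 * (v:ℂ)^3) • ∑ k : ZMod n, ∑ σ : Bool,
      (hop a (emb n k) (emb n k + 1) σ - hop a (emb n k + 1) (emb n (k + 1 + 1)) σ) := by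
  rw [comm21 a v car1 car2, FH2_eq a v, smul_lie_op, lie_smul_op, smul_smul,
    show ((v:ℂ) * (v:ℂ)^2) = (v:ℂ)^3 from by ring,
    show (2 * (v:ℂ)^3) = (v:ℂ)^3 * 2 from by ring, mul_smul]
  congr 1
  rw [two_smul]
  simp only [hop, sum_lie', lie_sum', add_lie_r, lie_add_r, sub_lie_r, lie_sub_r,
    comm_bb a car1 car2]
  simp only [emb_eq_iff, emb_add_one_ne, emb_ne_add_one, emb_sub_one_ne, emb_ne_sub_one,
    succ_eq_iff, eq_succ_iff, add_left_inj, sub_add_cancel, add_sub_cancel_right,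
    and_false, false_and, and_true, true_and, if_false, ite_and,
    Finset.sum_sub_distrib, Finset.sum_add_distrib,
    Finset.sum_ite_eq, Finset.sum_ite_eq', Finset.mem_univ, if_true, Finset.sum_const_zero,
    sum_ite_sub, sum_ite_sub']
  have hQ : (∑ x : ZMod n, ∑ σ : Bool, star (a (emb n (x+1)) σ) * a (emb n (x+1) + 1) σ)
      = ∑ x : ZMod n, ∑ σ : Bool, star (a (emb n x) σ) * a (emb n x + 1) σ :=
    sum_shift (fun x => ∑ σ : Bool, star (a (emb n x) σ) * a (emb n x + 1) σ) 1
  have hV : (∑ x : ZMod n, ∑ σ : Bool, star (a (emb n (x+1) + 1) σ) * a (emb n (x+1)) σ)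
      = ∑ x : ZMod n, ∑ σ : Bool, star (a (emb n x + 1) σ) * a (emb n x) σ :=
    sum_shift (fun x => ∑ σ : Bool, star (a (emb n x + 1) σ) * a (emb n x) σ) 1
  have hR : (∑ x : ZMod n, ∑ σ : Bool, star (a (emb n (x - 1) + 1) σ) * a (emb n (x + 1)) σ)
      = ∑ x : ZMod n, ∑ σ : Bool, star (a (emb n x + 1) σ) * a (emb n (x + 1 + 1)) σ := by
    rw [← sum_shift (fun x => ∑ σ : Bool, star (a (emb n (x - 1) + 1) σ) * a (emb n (x + 1)) σ) 1]
    refine Finset.sum_congr rfl fun k _ => ?_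
    simp [add_sub_cancel_right]
  have hU : (∑ x : ZMod n, ∑ σ : Bool, star (a (emb n (x + 1)) σ) * a (emb n (x - 1) + 1) σ)
      = ∑ x : ZMod n, ∑ σ : Bool, star (a (emb n (x + 1 + 1)) σ) * a (emb n x + 1) σ := by
    rw [← sum_shift (fun x => ∑ σ : Bool, star (a (emb n (x + 1)) σ) * a (emb n (x - 1) + 1) σ) 1]
    refine Finset.sum_congr rfl fun k _ => ?_
    simp [add_sub_cancel_right]
  rw [hQ, hV, hR, hU]
  abel

end main

/-- **Nested commutators of the kinetic terms of the 1D Fermi-Hubbard Hamiltonian:**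
`[H₁,[H₂,H₁]] = 2v³ Σ_{i∈Λ'} Σ_σ (h_{i−2,i+1,σ} − h_{i−1,i,σ})` and
`[H₂,[H₂,H₁]] = 2v³ Σ_{i∈Λ'} Σ_σ (h_{i,i+1,σ} − h_{i−1,i+2,σ})`. -/
theorem nested_comm_kinetic_1d
    {E : Type*} [NormedAddCommGroup E] [InnerProductSpace ℂ E] [CompleteSpace E]
    {L : ℕ} (hL : Even L) (hL6 : 6 ≤ L)
    (a : ZMod L → Bool → E →L[ℂ] E)
    (car1 : ∀ (i j : ZMod L) (σ τ : Bool), a i σ * a j τ + a j τ * a i σ = 0)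
    (car2 : ∀ (i j : ZMod L) (σ τ : Bool),
      a i σ * star (a j τ) + star (a j τ) * a i σ = if i = j ∧ σ = τ then 1 else 0)
    (v u : ℝ) :
    ⁅FH1 a v, ⁅FH2 a v, FH1 a v⁆⁆
      = (2 * (v : ℂ) ^ 3) • ∑ i ∈ Finset.range (L / 2), ∑ σ : Bool,
          (hop a (((2 * i : ℕ) : ZMod L) - 2) (((2 * i : ℕ) : ZMod L) + 1) σ -
            hop a (((2 * i : ℕ) : ZMod L) - 1) ((2 * i : ℕ) : ZMod L) σ) ∧
    ⁅FH2 a v, ⁅FH2 a v, FH1 a v⁆⁆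
      = (2 * (v : ℂ) ^ 3) • ∑ i ∈ Finset.range (L / 2), ∑ σ : Bool,
          (hop a ((2 * i : ℕ) : ZMod L) (((2 * i : ℕ) : ZMod L) + 1) σ -
            hop a (((2 * i : ℕ) : ZMod L) - 1) (((2 * i : ℕ) : ZMod L) + 2) σ) := by
  obtain ⟨n, rfl⟩ : ∃ n, L = 2 * n := by
    obtain ⟨r, hr⟩ := hL
    exact ⟨r, by omega⟩
  haveI : NeZero n := ⟨by omega⟩
  constructor
  · rw [comm121 a v car1 car2]
    congr 1
    rw [show (2 * n / 2) = n from Nat.mul_div_cancel_left n (by norm_num)]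
    refine Eq.symm ?_
    calc ∑ i ∈ Finset.range n, ∑ σ : Bool,
          (hop a (((2*i : ℕ) : ZMod (2*n)) - 2) (((2*i : ℕ) : ZMod (2*n)) + 1) σ -
            hop a (((2*i : ℕ) : ZMod (2*n)) - 1) ((2*i : ℕ) : ZMod (2*n)) σ)
        = ∑ i ∈ Finset.range n, (fun k : ZMod n => ∑ σ : Bool,
            (hop a (emb n k - 2) (emb n k + 1) σ - hop a (emb n k - 1) (emb n k) σ))
            ((i : ℕ) : ZMod n) := by
          refine Finset.sum_congr rfl fun i _ => ?_
          simp only [emb_natCast]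
      _ = ∑ k : ZMod n, ∑ σ : Bool,
            (hop a (emb n k - 2) (emb n k + 1) σ - hop a (emb n k - 1) (emb n k) σ) :=
          sum_range_zmod (fun k => ∑ σ : Bool,
            (hop a (emb n k - 2) (emb n k + 1) σ - hop a (emb n k - 1) (emb n k) σ))
      _ = ∑ k : ZMod n, ∑ σ : Bool,
            (hop a (emb n (k+1) - 2) (emb n (k+1) + 1) σ
              - hop a (emb n (k+1) - 1) (emb n (k+1)) σ) :=
          (sum_shift (fun k => ∑ σ : Bool,
            (hop a (emb n k - 2) (emb n k + 1) σ - hop a (emb n k - 1) (emb n k) σ)) 1).symm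
      _ = ∑ k : ZMod n, ∑ σ : Bool,
            (hop a (emb n k) (emb n (k+1) + 1) σ - hop a (emb n k + 1) (emb n (k+1)) σ) := by
          refine Finset.sum_congr rfl fun k _ => Finset.sum_congr rfl fun σ _ => ?_
          rw [emb_succ, show emb n k + 2 - 2 = emb n k from by ring,
            show emb n k + 2 - 1 = emb n k + 1 from by ring]
  · rw [comm221 a v car1 car2]
    congr 1
    rw [show (2 * n / 2) = n from Nat.mul_div_cancel_left n (by norm_num)]
    refine Eq.symm ?_
    calc ∑ i ∈ Finset.range n, ∑ σ : Bool,
          (hop a ((2*i : ℕ) : ZMod (2*n)) (((2*i : ℕ) : ZMod (2*n)) + 1) σ -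
            hop a (((2*i : ℕ) : ZMod (2*n)) - 1) (((2*i : ℕ) : ZMod (2*n)) + 2) σ)
        = ∑ i ∈ Finset.range n, (fun k : ZMod n => ∑ σ : Bool,
            (hop a (emb n k) (emb n k + 1) σ - hop a (emb n k - 1) (emb n k + 2) σ))
            ((i : ℕ) : ZMod n) := by
          refine Finset.sum_congr rfl fun i _ => ?_
          simp only [emb_natCast]
      _ = ∑ k : ZMod n, ∑ σ : Bool,
            (hop a (emb n k) (emb n k + 1) σ - hop a (emb n k - 1) (emb n k + 2) σ) :=
          sum_range_zmod (fun k => ∑ σ : Bool,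
            (hop a (emb n k) (emb n k + 1) σ - hop a (emb n k - 1) (emb n k + 2) σ))
      _ = (∑ k : ZMod n, ∑ σ : Bool, hop a (emb n k) (emb n k + 1) σ)
            - ∑ k : ZMod n, ∑ σ : Bool, hop a (emb n k - 1) (emb n k + 2) σ := by
          simp only [Finset.sum_sub_distrib]
      _ = (∑ k : ZMod n, ∑ σ : Bool, hop a (emb n k) (emb n k + 1) σ)
            - ∑ k : ZMod n, ∑ σ : Bool, hop a (emb n (k+1) - 1) (emb n (k+1) + 2) σ := by
          rw [sum_shift (fun k => ∑ σ : Bool, hop a (emb n k - 1) (emb n k + 2) σ) 1]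
      _ = (∑ k : ZMod n, ∑ σ : Bool, hop a (emb n k) (emb n k + 1) σ)
            - ∑ k : ZMod n, ∑ σ : Bool, hop a (emb n k + 1) (emb n (k+1+1)) σ := by
          congr 1
          refine Finset.sum_congr rfl fun k _ => Finset.sum_congr rfl fun σ _ => ?_
          rw [show emb n (k+1+1) = emb n (k+1) + 2 from emb_succ (k+1), emb_succ,
            show emb n k + 2 - 1 = emb n k + 1 from by ring]
      _ = ∑ k : ZMod n, ∑ σ : Bool,
            (hop a (emb n k) (emb n k + 1) σ - hop a (emb n k + 1) (emb n (k+1+1)) σ) := by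
          simp only [Finset.sum_sub_distrib]
end
end

section
/- For the decomposition of the one-dimensional Fermi-Hubbard Hamiltonian, [H_3, H_1] = vu Σ_{i∈Λ'} Σ_{σ∈{↑,↓}} h̃_{i,i+1,σ} · ( n_{i,σ̄} − n_{i+1,σ̄} ) and [H_3, H_2] = vu Σ_{i∈Λ'} Σ_{σ∈{↑,↓}} h̃_{i−1,i,σ} · ( n_{i−1,σ̄} − n_{i,σ̄} ), where σ̄ denotes the flipped spin. -/
section CAR
variable {E : Type*} [NormedAddCommGroup E] [InnerProductSpace ℂ E] [CompleteSpace E]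
variable {Λ : Type*} [DecidableEq Λ] (a : Λ → Bool → E →L[ℂ] E)
variable (car1 : ∀ (i j : Λ) (σ τ : Bool), a i σ * a j τ + a j τ * a i σ = 0)
variable (car2 : ∀ (i j : Λ) (σ τ : Bool),
    a i σ * star (a j τ) + star (a j τ) * a i σ = if i = j ∧ σ = τ then 1 else 0)


include car1 car2 in
lemma num_mul_a (k : Λ) (τ : Bool) (j : Λ) (σ : Bool) :
    num a k τ * a j σ = a j σ * num a k τ - (if j = k ∧ σ = τ then a j σ else 0) := by
  have h1 : a k τ * a j σ = -(a j σ * a k τ) := eq_neg_of_add_eq_zero_left (car1 k j τ σ)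
  have h2 : star (a k τ) * a j σ
      = (if j = k ∧ σ = τ then 1 else 0) - a j σ * star (a k τ) := by
    have := car2 j k σ τ
    rw [add_comm] at this
    exact eq_sub_of_add_eq this
  unfold num
  rw [mul_assoc, h1, mul_neg, ← mul_assoc, h2]
  by_cases h : j = k ∧ σ = τ
  · simp only [if_pos h]
    obtain ⟨h3, h4⟩ := h; subst h3; subst h4
    noncomm_ring
  · simp only [if_neg h]
    noncomm_ring

include car1 car2 in
lemma num_mul_astar (k : Λ) (τ : Bool) (j : Λ) (σ : Bool) :
    num a k τ * star (a j σ)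
      = star (a j σ) * num a k τ + (if j = k ∧ σ = τ then star (a j σ) else 0) := by
  have hs : star (a k τ) * star (a j σ) = -(star (a j σ) * star (a k τ)) := by
    have := congrArg star (car1 j k σ τ)
    simp only [star_add, star_mul, star_zero] at this
    exact eq_neg_of_add_eq_zero_left this
  have h2 : a k τ * star (a j σ)
      = (if j = k ∧ σ = τ then 1 else 0) - star (a j σ) * a k τ := by
    have h0 := car2 k j τ σ
    have h' : ((if k = j ∧ τ = σ then 1 else 0) : E →L[ℂ] E)
        = (if j = k ∧ σ = τ then 1 else 0) := by
      by_cases h : j = k ∧ σ = τ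
      · rw [if_pos h, if_pos ⟨h.1.symm, h.2.symm⟩]
      · rw [if_neg h, if_neg (fun hc => h ⟨hc.1.symm, hc.2.symm⟩)]
    rw [h'] at h0
    exact eq_sub_of_add_eq h0
  unfold num
  rw [mul_assoc, h2]
  by_cases h : j = k ∧ σ = τ
  · simp only [if_pos h]
    obtain ⟨h3, h4⟩ := h; subst h3; subst h4
    have hss : star (a j σ) * star (a j σ) = 0 := by
      have h2x : star (a j σ) * star (a j σ) + star (a j σ) * star (a j σ) = 0 :=
        add_eq_zero_iff_eq_neg.mpr hs
      have h3x : (2 : ℂ) • (star (a j σ) * star (a j σ)) = 0 := by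
        rw [two_smul]; exact h2x
      rcases smul_eq_zero.mp h3x with h | h
      · exact absurd h two_ne_zero
      · exact h
    rw [mul_sub, mul_one, ← mul_assoc, hss, zero_mul]
    noncomm_ring
  · simp only [if_neg h]
    rw [mul_sub, mul_zero, ← mul_assoc, hs]
    noncomm_ring

include car1 car2 in
lemma num_mul_sa (k : Λ) (τ : Bool) (i j : Λ) (σ : Bool) :
    num a k τ * (star (a i σ) * a j σ)
      = star (a i σ) * a j σ * num a k τ
        + (((if i = k then 1 else 0) - if j = k then 1 else 0 : ℂ) * if σ = τ then 1 else 0)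
            • (star (a i σ) * a j σ) := by
  rw [← mul_assoc, num_mul_astar a car1 car2, add_mul, mul_assoc,
    num_mul_a a car1 car2]
  by_cases hστ : σ = τ
  · subst hστ
    simp only [eq_self_iff_true, and_true, if_pos rfl, mul_one]
    by_cases hik : i = k <;> by_cases hjk : j = k
    · simp only [if_pos hik, if_pos hjk, sub_self, zero_smul, add_zero]
      simp [mul_add, mul_sub, mul_smul_comm, smul_mul_assoc, mul_assoc] <;> abel
    · simp only [if_pos hik, if_neg hjk, sub_zero, one_smul]
      simp [mul_add, mul_sub, mul_smul_comm, smul_mul_assoc, mul_assoc] <;> abel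
    · simp only [if_neg hik, if_pos hjk, zero_sub, neg_smul, one_smul]
      simp [mul_add, mul_sub, mul_smul_comm, smul_mul_assoc, mul_assoc] <;> abel
    · simp only [if_neg hik, if_neg hjk, sub_self, zero_smul, add_zero]
      simp [mul_add, mul_sub, mul_smul_comm, smul_mul_assoc, mul_assoc] <;> abel
  · have h1 : ¬(i = k ∧ σ = τ) := fun h => hστ h.2
    have h2 : ¬(j = k ∧ σ = τ) := fun h => hστ h.2
    simp only [if_neg h1, if_neg h2, if_neg hστ, mul_zero, zero_smul, add_zero, zero_mul,
      sub_zero, mul_sub]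
    noncomm_ring

include car1 car2 in
lemma D_mul_sa (k i j : Λ) (σ : Bool) :
    num a k true * num a k false * (star (a i σ) * a j σ)
      = star (a i σ) * a j σ * (num a k true * num a k false)
        + ((if i = k then 1 else 0 : ℂ) - if j = k then 1 else 0)
            • (star (a i σ) * a j σ * num a k (!σ)) := by
  cases σ
  · -- σ = false : num true commutes, num false contributes
    have ht : num a k true * (star (a i false) * a j false)
        = star (a i false) * a j false * num a k true := by
      have h := num_mul_sa a car1 car2 k true i j false
      simpa using h
    have hf : num a k false * (star (a i false) * a j false)
        = star (a i false) * a j false * num a k false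
          + ((if i = k then 1 else 0 : ℂ) - if j = k then 1 else 0)
              • (star (a i false) * a j false) := by
      have h := num_mul_sa a car1 car2 k false i j false
      simpa using h
    calc num a k true * num a k false * (star (a i false) * a j false)
        = num a k true * (num a k false * (star (a i false) * a j false)) := by
          rw [mul_assoc]
      _ = num a k true * (star (a i false) * a j false * num a k false
            + ((if i = k then 1 else 0 : ℂ) - if j = k then 1 else 0)
                • (star (a i false) * a j false)) := by rw [hf]
      _ = num a k true * (star (a i false) * a j false) * num a k false
            + ((if i = k then 1 else 0 : ℂ) - if j = k then 1 else 0)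
                • (num a k true * (star (a i false) * a j false)) := by
          rw [mul_add, mul_smul_comm]; simp only [mul_assoc]
      _ = star (a i false) * a j false * (num a k true * num a k false)
            + ((if i = k then 1 else 0 : ℂ) - if j = k then 1 else 0)
                • (star (a i false) * a j false * num a k (!false)) := by
          rw [ht, mul_assoc]; rfl
  · -- σ = true
    have hf : num a k false * (star (a i true) * a j true)
        = star (a i true) * a j true * num a k false := by
      have h := num_mul_sa a car1 car2 k false i j true
      simpa using h
    have ht : num a k true * (star (a i true) * a j true)
        = star (a i true) * a j true * num a k true
          + ((if i = k then 1 else 0 : ℂ) - if j = k then 1 else 0)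
              • (star (a i true) * a j true) := by
      have h := num_mul_sa a car1 car2 k true i j true
      simpa using h
    calc num a k true * num a k false * (star (a i true) * a j true)
        = num a k true * (num a k false * (star (a i true) * a j true)) := by
          rw [mul_assoc]
      _ = num a k true * (star (a i true) * a j true) * num a k false := by
          rw [hf]; simp only [mul_assoc]
      _ = (star (a i true) * a j true * num a k true
            + ((if i = k then 1 else 0 : ℂ) - if j = k then 1 else 0)
                • (star (a i true) * a j true)) * num a k false := by rw [ht]
      _ = star (a i true) * a j true * (num a k true * num a k false)
            + ((if i = k then 1 else 0 : ℂ) - if j = k then 1 else 0)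
                • (star (a i true) * a j true * num a k (!true)) := by
          rw [add_mul, smul_mul_assoc, mul_assoc]; rfl

include car1 car2 in
lemma comm_D_hop (k i j : Λ) (σ : Bool) :
    ⁅num a k true * num a k false, hop a i j σ⁆
      = ((if i = k then 1 else 0 : ℂ) - if j = k then 1 else 0)
          • (shop a i j σ * num a k (!σ)) := by
  have hX := D_mul_sa a car1 car2 k i j σ
  have hY := D_mul_sa a car1 car2 k j i σ
  rw [Ring.lie_def]
  unfold hop shop
  rw [mul_add, hX, hY]
  have hc : ((if j = k then 1 else 0 : ℂ) - if i = k then 1 else 0)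
      = -((if i = k then 1 else 0 : ℂ) - if j = k then 1 else 0) := by ring
  rw [hc, neg_smul, sub_mul, smul_sub, add_mul]
  abel

end CAR

section ZModFacts

variable {L : ℕ} (hL2 : L % 2 = 0) (hL6 : 6 ≤ L)

include hL2 hL6 in
lemma zfact1 {i k : ℕ} (hi : i < L / 2) (hk : k < L / 2) :
    ((2 * i : ℕ) : ZMod L) = ((2 * k : ℕ) : ZMod L) ↔ i = k := by
  rw [ZMod.natCast_eq_natCast_iff]
  constructor
  · intro h
    have h' : 2 * i % L = 2 * k % L := h
    rw [Nat.mod_eq_of_lt (by omega), Nat.mod_eq_of_lt (by omega)] at h'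
    omega
  · rintro rfl; rfl

include hL2 in
lemma zfact2 (i k : ℕ) : ((2 * i : ℕ) : ZMod L) ≠ ((2 * k : ℕ) : ZMod L) + 1 := by
  intro h
  have h2 : ((2 * i : ℕ) : ZMod L) = ((2 * k + 1 : ℕ) : ZMod L) := by
    rw [Nat.cast_add, Nat.cast_one]; exact h
  rw [ZMod.natCast_eq_natCast_iff] at h2
  have h3 : 2 * i ≡ 2 * k + 1 [MOD 2] := h2.of_dvd (by omega)
  have h4 : 2 * i % 2 = (2 * k + 1) % 2 := h3
  omega

include hL2 hL6 in
lemma zfact3 {i k : ℕ} (hi : i < L / 2) (hk : k < L / 2) :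
    (((2 * k : ℕ) : ZMod L) + 1 = ((2 * i : ℕ) : ZMod L) - 1)
      ↔ k = (if i = 0 then L / 2 - 1 else i - 1) := by
  have hrw : (((2 * k : ℕ) : ZMod L) + 1 = ((2 * i : ℕ) : ZMod L) - 1)
      ↔ ((2 * k + 2 : ℕ) : ZMod L) = ((2 * i : ℕ) : ZMod L) := by
    rw [eq_sub_iff_add_eq]
    constructor
    · intro h; rw [← h]; push_cast; ring
    · intro h; rw [← h]; push_cast; ring
  rw [hrw, ZMod.natCast_eq_natCast_iff]
  unfold Nat.ModEq
  rcases Nat.lt_or_ge (2 * k + 2) L with h | h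
  · rw [Nat.mod_eq_of_lt h, Nat.mod_eq_of_lt (by omega)]
    split_ifs with h0 <;> omega
  · have he : 2 * k + 2 = L := by omega
    rw [he, Nat.mod_self, Nat.mod_eq_of_lt (by omega)]
    split_ifs with h0 <;> omega


end ZModFacts

section Helpers

lemma comm_sum_sum {R : Type*} [Ring R] {ι κ : Type*} (s : Finset ι) (t : Finset κ)
    (f : ι → R) (g : κ → R) :
    ⁅∑ i ∈ s, f i, ∑ j ∈ t, g j⁆ = ∑ i ∈ s, ∑ j ∈ t, ⁅f i, g j⁆ := by
  simp only [Ring.lie_def, Finset.sum_mul, Finset.mul_sum]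
  rw [Finset.sum_comm (s := t)]
  rw [← Finset.sum_sub_distrib]
  exact Finset.sum_congr rfl fun i _ => (Finset.sum_sub_distrib _ _).symm

lemma lie_sum_right {R : Type*} [Ring R] {ι : Type*} (x : R) (s : Finset ι) (f : ι → R) :
    ⁅x, ∑ i ∈ s, f i⁆ = ∑ i ∈ s, ⁅x, f i⁆ := by
  simp only [Ring.lie_def, Finset.mul_sum, Finset.sum_mul, ← Finset.sum_sub_distrib]

lemma smul_bracket {E : Type*} [NormedAddCommGroup E] [InnerProductSpace ℂ E]
    [CompleteSpace E] (c d : ℂ) (A B : E →L[ℂ] E) :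
    ⁅c • A, d • B⁆ = (c * d) • ⁅A, B⁆ := by
  simp only [Ring.lie_def, smul_mul_assoc, mul_smul_comm, smul_smul, smul_sub,
    mul_comm c d]

end Helpers


/-- **Commutators of the interaction term with the kinetic terms of the 1D Fermi-Hubbard
Hamiltonian:** `[H₃,H₁] = vu Σ_{i∈Λ'} Σ_σ h̃_{i,i+1,σ}·(n_{i,σ̄} − n_{i+1,σ̄})` and
`[H₃,H₂] = vu Σ_{i∈Λ'} Σ_σ h̃_{i−1,i,σ}·(n_{i−1,σ̄} − n_{i,σ̄})`, with `σ̄` the flipped spin. -/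
theorem comm_FH3_kinetic_1d
    {E : Type*} [NormedAddCommGroup E] [InnerProductSpace ℂ E] [CompleteSpace E]
    {L : ℕ} (hL : Even L) (hL6 : 6 ≤ L)
    (a : ZMod L → Bool → E →L[ℂ] E)
    (car1 : ∀ (i j : ZMod L) (σ τ : Bool), a i σ * a j τ + a j τ * a i σ = 0)
    (car2 : ∀ (i j : ZMod L) (σ τ : Bool),
      a i σ * star (a j τ) + star (a j τ) * a i σ = if i = j ∧ σ = τ then 1 else 0)
    (v u : ℝ) :
    ⁅FH3 a u, FH1 a v⁆
      = ((v : ℂ) * (u : ℂ)) • ∑ i ∈ Finset.range (L / 2), ∑ σ : Bool,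
          shop a ((2 * i : ℕ) : ZMod L) (((2 * i : ℕ) : ZMod L) + 1) σ *
            (num a ((2 * i : ℕ) : ZMod L) (!σ) - num a (((2 * i : ℕ) : ZMod L) + 1) (!σ)) ∧
    ⁅FH3 a u, FH2 a v⁆
      = ((v : ℂ) * (u : ℂ)) • ∑ i ∈ Finset.range (L / 2), ∑ σ : Bool,
          shop a (((2 * i : ℕ) : ZMod L) - 1) ((2 * i : ℕ) : ZMod L) σ *
            (num a (((2 * i : ℕ) : ZMod L) - 1) (!σ) - num a ((2 * i : ℕ) : ZMod L) (!σ)) := by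
  have hL2 : L % 2 = 0 := Nat.even_iff.mp hL
  constructor
  · unfold FH3 FH1
    rw [smul_bracket, comm_sum_sum, mul_comm (u : ℂ) (v : ℂ)]
    congr 1
    rw [Finset.sum_comm]
    refine Finset.sum_congr rfl fun i hi => ?_
    rw [Finset.mem_range] at hi
    have hstep : ∀ m ∈ Finset.range (L / 2),
        ⁅num a ((2 * m : ℕ) : ZMod L) true * num a ((2 * m : ℕ) : ZMod L) false +
            num a (((2 * m : ℕ) : ZMod L) + 1) true * num a (((2 * m : ℕ) : ZMod L) + 1) false,
          ∑ σ : Bool, hop a ((2 * i : ℕ) : ZMod L) (((2 * i : ℕ) : ZMod L) + 1) σ⁆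
        = ∑ σ : Bool, if m = i then
            shop a ((2 * i : ℕ) : ZMod L) (((2 * i : ℕ) : ZMod L) + 1) σ *
              (num a ((2 * i : ℕ) : ZMod L) (!σ) - num a (((2 * i : ℕ) : ZMod L) + 1) (!σ))
          else 0 := by
      intro m hm
      rw [Finset.mem_range] at hm
      rw [lie_sum_right]
      refine Finset.sum_congr rfl fun σ _ => ?_
      rw [show ∀ x y z : E →L[ℂ] E, ⁅x + y, z⁆ = ⁅x, z⁆ + ⁅y, z⁆ from fun x y z => by
          simp only [Ring.lie_def]; noncomm_ring, comm_D_hop a car1 car2, comm_D_hop a car1 car2]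
      have c1 : (((2 * i : ℕ) : ZMod L) = ((2 * m : ℕ) : ZMod L)) ↔ i = m :=
        zfact1 hL2 hL6 hi hm
      have c2 : ¬(((2 * i : ℕ) : ZMod L) + 1 = ((2 * m : ℕ) : ZMod L)) :=
        fun h => zfact2 hL2 m i h.symm
      have c3 : ¬(((2 * i : ℕ) : ZMod L) = ((2 * m : ℕ) : ZMod L) + 1) := zfact2 hL2 i m
      have c4 : (((2 * i : ℕ) : ZMod L) + 1 = ((2 * m : ℕ) : ZMod L) + 1) ↔ i = m := by
        rw [add_left_inj]; exact zfact1 hL2 hL6 hi hm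
      by_cases h : m = i
      · subst h
        rw [if_pos (c1.mpr rfl), if_neg c2, if_pos (c4.mpr rfl), if_neg c3, if_pos rfl]
        simp only [sub_zero, one_smul, zero_sub, neg_smul, mul_sub]
        abel
      · rw [if_neg fun hc => h (c1.mp hc).symm, if_neg c2,
          if_neg fun hc => h (c4.mp hc).symm, if_neg c3, if_neg h]
        simp
    rw [Finset.sum_congr rfl hstep, Finset.sum_comm]
    refine Finset.sum_congr rfl fun σ _ => ?_
    rw [Finset.sum_ite_eq', if_pos (Finset.mem_range.mpr hi)]
  · unfold FH3 FH2
    rw [smul_bracket, comm_sum_sum, mul_comm (u : ℂ) (v : ℂ)]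
    congr 1
    rw [Finset.sum_comm]
    refine Finset.sum_congr rfl fun i hi => ?_
    rw [Finset.mem_range] at hi
    have hk0 : (if i = 0 then L / 2 - 1 else i - 1) < L / 2 := by split_ifs <;> omega
    have hstep : ∀ m ∈ Finset.range (L / 2),
        ⁅num a ((2 * m : ℕ) : ZMod L) true * num a ((2 * m : ℕ) : ZMod L) false +
            num a (((2 * m : ℕ) : ZMod L) + 1) true * num a (((2 * m : ℕ) : ZMod L) + 1) false,
          ∑ σ : Bool, hop a (((2 * i : ℕ) : ZMod L) - 1) ((2 * i : ℕ) : ZMod L) σ⁆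
        = ∑ σ : Bool,
            ((if m = (if i = 0 then L / 2 - 1 else i - 1) then
                shop a (((2 * i : ℕ) : ZMod L) - 1) ((2 * i : ℕ) : ZMod L) σ *
                  num a (((2 * i : ℕ) : ZMod L) - 1) (!σ) else 0)
             - (if m = i then
                shop a (((2 * i : ℕ) : ZMod L) - 1) ((2 * i : ℕ) : ZMod L) σ *
                  num a ((2 * i : ℕ) : ZMod L) (!σ) else 0)) := by
      intro m hm
      rw [Finset.mem_range] at hm
      rw [lie_sum_right]
      refine Finset.sum_congr rfl fun σ _ => ?_
      rw [show ∀ x y z : E →L[ℂ] E, ⁅x + y, z⁆ = ⁅x, z⁆ + ⁅y, z⁆ from fun x y z => by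
          simp only [Ring.lie_def]; noncomm_ring, comm_D_hop a car1 car2, comm_D_hop a car1 car2]
      have cA : ¬(((2 * i : ℕ) : ZMod L) - 1 = ((2 * m : ℕ) : ZMod L)) := by
        rw [sub_eq_iff_eq_add]
        exact zfact2 hL2 i m
      have cB : (((2 * i : ℕ) : ZMod L) = ((2 * m : ℕ) : ZMod L)) ↔ i = m :=
        zfact1 hL2 hL6 hi hm
      have cC : (((2 * i : ℕ) : ZMod L) - 1 = ((2 * m : ℕ) : ZMod L) + 1)
          ↔ m = (if i = 0 then L / 2 - 1 else i - 1) := by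
        rw [eq_comm]; exact zfact3 hL2 hL6 hi hm
      have cD : ¬(((2 * i : ℕ) : ZMod L) = ((2 * m : ℕ) : ZMod L) + 1) := zfact2 hL2 i m
      rw [if_neg cA, if_neg cD]
      by_cases h1 : m = i
      · subst h1
        have hne : ¬(m = (if m = 0 then L / 2 - 1 else m - 1)) := by split_ifs <;> omega
        rw [if_pos (cB.mpr rfl), if_neg fun hc => hne (cC.mp hc), if_neg hne, if_pos rfl]
        simp
      · rw [if_neg fun hc => h1 (cB.mp hc).symm, if_neg h1]
        by_cases h2 : m = (if i = 0 then L / 2 - 1 else i - 1)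
        · rw [if_pos (cC.mpr h2), if_pos h2,
            show ((2 * m : ℕ) : ZMod L) + 1 = ((2 * i : ℕ) : ZMod L) - 1 from (cC.mpr h2).symm]
          simp
        · rw [if_neg fun hc => h2 (cC.mp hc), if_neg h2]
          simp
    rw [Finset.sum_congr rfl hstep, Finset.sum_comm]
    refine Finset.sum_congr rfl fun σ _ => ?_
    rw [Finset.sum_sub_distrib, Finset.sum_ite_eq', Finset.sum_ite_eq',
      if_pos (Finset.mem_range.mpr hk0), if_pos (Finset.mem_range.mpr hi), mul_sub]
end

section
/- For the decomposition of the one-dimensional Fermi-Hubbard Hamiltonian, [H_1, [H_3, H_1]] = −4v²u Σ_{i∈Λ'} ( (n_{i↑} − n_{i+1,↑})(n_{i↓} − n_{i+1,↓}) + h̃_{i,i+1,↑} · h̃_{i,i+1,↓} ). -/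
set_option linter.unusedSectionVars false
set_option maxHeartbeats 1000000

section AuxRing
variable {R : Type*} [Ring R]

lemma mz {x y w : R} (h : x * y = w) (z : R) :
    x * (y * z) = w * z := by rw [← mul_assoc, h]

lemma push_aux {x y : R} (h : x * y = -(y * x)) (z : R) :
    x * (y * z) = -(y * (x * z)) := by
  rw [← mul_assoc, h, neg_mul, mul_assoc]

lemma sq_zero_aux {x : R} (h : x * x = 0) (z : R) : x * (x * z) = 0 := by
  rw [← mul_assoc, h, zero_mul]

lemma lie_sum_aux {ι : Type*} (s : Finset ι) (f : ι → R) (x : R) :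
    ⁅x, ∑ i ∈ s, f i⁆ = ∑ i ∈ s, ⁅x, f i⁆ := by
  simp only [Ring.lie_def, Finset.mul_sum, Finset.sum_mul, ← Finset.sum_sub_distrib]

lemma sum_lie_aux {ι : Type*} (s : Finset ι) (f : ι → R) (x : R) :
    ⁅∑ i ∈ s, f i, x⁆ = ∑ i ∈ s, ⁅f i, x⁆ := by
  simp only [Ring.lie_def, Finset.mul_sum, Finset.sum_mul, ← Finset.sum_sub_distrib]

lemma core {R : Type*} [Ring R] (Xt Yt Pt Qt Xf Yf Pf Qf : R)
    (hPXt : Pt * Xt = Xt)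
    (hXPt : Xt * Pt = 0)
    (hQXt : Qt * Xt = 0)
    (hXQt : Xt * Qt = Xt)
    (hPYt : Pt * Yt = 0)
    (hYPt : Yt * Pt = Yt)
    (hQYt : Qt * Yt = Yt)
    (hYQt : Yt * Qt = 0)
    (hXYt : Xt * Yt = Pt - Pt * Qt)
    (hYXt : Yt * Xt = Qt - Pt * Qt)
    (hXXt : Xt * Xt = 0)
    (hYYt : Yt * Yt = 0)
    (hPPt : Pt * Pt = Pt)
    (hQQt : Qt * Qt = Qt)
    (hQPt : Qt * Pt = Pt * Qt)
    (hPXf : Pf * Xf = Xf)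
    (hXPf : Xf * Pf = 0)
    (hQXf : Qf * Xf = 0)
    (hXQf : Xf * Qf = Xf)
    (hPYf : Pf * Yf = 0)
    (hYPf : Yf * Pf = Yf)
    (hQYf : Qf * Yf = Yf)
    (hYQf : Yf * Qf = 0)
    (hXYf : Xf * Yf = Pf - Pf * Qf)
    (hYXf : Yf * Xf = Qf - Pf * Qf)
    (hXXf : Xf * Xf = 0)
    (hYYf : Yf * Yf = 0)
    (hPPf : Pf * Pf = Pf)
    (hQQf : Qf * Qf = Qf)
    (hQPf : Qf * Pf = Pf * Qf)
    (hcXfXt : Xf * Xt = Xt * Xf)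
    (hcXfYt : Xf * Yt = Yt * Xf)
    (hcXfPt : Xf * Pt = Pt * Xf)
    (hcXfQt : Xf * Qt = Qt * Xf)
    (hcYfXt : Yf * Xt = Xt * Yf)
    (hcYfYt : Yf * Yt = Yt * Yf)
    (hcYfPt : Yf * Pt = Pt * Yf)
    (hcYfQt : Yf * Qt = Qt * Yf)
    (hcPfXt : Pf * Xt = Xt * Pf)
    (hcPfYt : Pf * Yt = Yt * Pf)
    (hcPfPt : Pf * Pt = Pt * Pf)
    (hcPfQt : Pf * Qt = Qt * Pf)
    (hcQfXt : Qf * Xt = Xt * Qf)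
    (hcQfYt : Qf * Yt = Yt * Qf)
    (hcQfPt : Qf * Pt = Pt * Qf)
    (hcQfQt : Qf * Qt = Qt * Qf)
    :
    ⁅(Xt + Yt) + (Xf + Yf), ⁅Pt * Pf + Qt * Qf, (Xt + Yt) + (Xf + Yf)⁆⁆
      = -(((Pt - Qt) * (Pf - Qf) + (Xt - Yt) * (Xf - Yf))
          + ((Pt - Qt) * (Pf - Qf) + (Xt - Yt) * (Xf - Yf))
          + ((Pt - Qt) * (Pf - Qf) + (Xt - Yt) * (Xf - Yf))
          + ((Pt - Qt) * (Pf - Qf) + (Xt - Yt) * (Xf - Yf))) := by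
  simp only [Ring.lie_def, mul_add, add_mul, mul_sub, sub_mul, mul_assoc]
  simp only [hPXt, mz hPXt, hXPt, mz hXPt, hQXt, mz hQXt, hXQt, mz hXQt, hPYt, mz hPYt, hYPt, mz hYPt, hQYt, mz hQYt, hYQt, mz hYQt, hXYt, mz hXYt, hYXt, mz hYXt, hXXt, mz hXXt, hYYt, mz hYYt, hPPt, mz hPPt, hQQt, mz hQQt, hQPt, mz hQPt, hPXf, mz hPXf, hXPf, mz hXPf, hQXf, mz hQXf, hXQf, mz hXQf, hPYf, mz hPYf, hYPf, mz hYPf, hQYf, mz hQYf, hYQf, mz hYQf, hXYf, mz hXYf, hYXf, mz hYXf, hXXf, mz hXXf, hYYf, mz hYYf, hPPf, mz hPPf, hQQf, mz hQQf, hQPf, mz hQPf, hcXfXt, mz hcXfXt, hcXfYt, mz hcXfYt, hcXfPt, mz hcXfPt, hcXfQt, mz hcXfQt, hcYfXt, mz hcYfXt, hcYfYt, mz hcYfYt, hcYfPt, mz hcYfPt, hcYfQt, mz hcYfQt, hcPfXt, mz hcPfXt, hcPfYt, mz hcPfYt, hcPfPt, mz hcPfPt, hcPfQt, mz hcPfQt,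 hcQfXt, mz hcQfXt, hcQfYt, mz hcQfYt, hcQfPt, mz hcQfPt, hcQfQt, mz hcQfQt, mul_zero, zero_mul, mul_one, one_mul,
    sub_zero, zero_sub, add_zero, zero_add, neg_neg, mul_add, add_mul, mul_sub, sub_mul, mul_assoc]
  abel

end AuxRing

section CAR
variable {E : Type*} [NormedAddCommGroup E] [InnerProductSpace ℂ E] [CompleteSpace E]
variable {L : ℕ} {a : ZMod L → Bool → E →L[ℂ] E}
variable (car1 : ∀ (i j : ZMod L) (σ τ : Bool), a i σ * a j τ + a j τ * a i σ = 0)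
variable (car2 : ∀ (i j : ZMod L) (σ τ : Bool),
      a i σ * star (a j τ) + star (a j τ) * a i σ = if i = j ∧ σ = τ then 1 else 0)

include car1 in
lemma aa_eq (i j : ZMod L) (σ τ : Bool) : a i σ * a j τ = -(a j τ * a i σ) :=
  eq_neg_of_add_eq_zero_left (car1 i j σ τ)

include car1 in
lemma ss_eq (i j : ZMod L) (σ τ : Bool) :
    star (a i σ) * star (a j τ) = -(star (a j τ) * star (a i σ)) := by
  apply eq_neg_of_add_eq_zero_left
  have := congrArg star (car1 j i τ σ)
  simpa [star_add, star_mul, add_comm] using this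

include car2 in
lemma as_eq (i j : ZMod L) (σ τ : Bool) (h : ¬(i = j ∧ σ = τ)) :
    a i σ * star (a j τ) = -(star (a j τ) * a i σ) := by
  apply eq_neg_of_add_eq_zero_left
  simpa [if_neg h] using car2 i j σ τ

include car2 in
lemma sa_eq (i j : ZMod L) (σ τ : Bool) (h : ¬(j = i ∧ τ = σ)) :
    star (a i σ) * a j τ = -(a j τ * star (a i σ)) := by
  apply eq_neg_of_add_eq_zero_right
  simpa [if_neg h] using car2 j i τ σ

include car2 in
lemma as_self (i : ZMod L) (σ : Bool) :
    a i σ * star (a i σ) = 1 - star (a i σ) * a i σ := by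
  have h := car2 i i σ σ
  rw [if_pos ⟨rfl, rfl⟩] at h
  exact eq_sub_of_add_eq h

include car1 in
lemma aa_self (i : ZMod L) (σ : Bool) : a i σ * a i σ = 0 := by
  have h := car1 i i σ σ
  have : (2 : ℂ) • (a i σ * a i σ) = 0 := by rw [two_smul]; exact h
  simpa using (smul_eq_zero.mp this).resolve_left (by norm_num)

include car1 in
lemma ss_self (i : ZMod L) (σ : Bool) :
    star (a i σ) * star (a i σ) = 0 := by
  have h := ss_eq car1 i i σ σ
  have : (2 : ℂ) • (star (a i σ) * star (a i σ)) = 0 := by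
    rw [two_smul]; nth_rewrite 1 [h]; exact neg_add_cancel _
  simpa using (smul_eq_zero.mp this).resolve_left (by norm_num)

include car1 car2 in
/-- quadratics on disjoint modes commute -/
lemma Q_comm (i j k l : ZMod L) (σ τ ρ π : Bool)
    (hjk : ¬(j = k ∧ τ = ρ)) (hli : ¬(l = i ∧ π = σ)) :
    (star (a i σ) * a j τ) * (star (a k ρ) * a l π)
      = (star (a k ρ) * a l π) * (star (a i σ) * a j τ) := by
  rw [mul_assoc, push_aux (as_eq car2 j k τ ρ hjk) (a l π), aa_eq car1 j l τ π]
  simp only [mul_neg, neg_neg]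
  rw [push_aux (ss_eq car1 i k σ ρ) (a l π * a j τ),
      push_aux (sa_eq car2 i l σ π hli) (a j τ)]
  simp only [mul_neg, neg_neg]
  rw [mul_assoc]

include car1 car2 in
lemma L1 (r s : ZMod L) (σ : Bool) :
    (star (a r σ) * a r σ) * (star (a r σ) * a s σ) = star (a r σ) * a s σ := by
  rw [mul_assoc, ← mul_assoc (a r σ), as_self car2 r σ, sub_mul, one_mul, mul_sub,
      mul_assoc (star (a r σ)) (a r σ), sq_zero_aux (ss_self car1 r σ), sub_zero]

include car1 car2 in
lemma L2 (r s : ZMod L) (σ : Bool) :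
    (star (a r σ) * a s σ) * (star (a s σ) * a s σ) = star (a r σ) * a s σ := by
  rw [mul_assoc, ← mul_assoc (a s σ), as_self car2 s σ, sub_mul, one_mul, mul_sub,
      mul_assoc (star (a s σ)) (a s σ), aa_self car1 s σ, mul_zero, mul_zero, sub_zero]

include car1 car2 in
lemma L3 (r s : ZMod L) (σ : Bool) (h : s ≠ r) :
    (star (a s σ) * a s σ) * (star (a r σ) * a s σ) = 0 := by
  rw [mul_assoc, push_aux (as_eq car2 s r σ σ (by simp [h])) (a s σ),
      aa_self car1 s σ, mul_zero, neg_zero, mul_zero]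

include car1 car2 in
lemma L4 (r s : ZMod L) (σ : Bool) (h : s ≠ r) :
    (star (a r σ) * a s σ) * (star (a r σ) * a r σ) = 0 := by
  rw [mul_assoc, push_aux (as_eq car2 s r σ σ (by simp [h])) (a r σ), mul_neg,
      sq_zero_aux (ss_self car1 r σ), neg_zero]

include car1 car2 in
lemma L6 (r s : ZMod L) (σ : Bool) (h : s ≠ r) :
    (star (a r σ) * a s σ) * (star (a r σ) * a s σ) = 0 := by
  rw [mul_assoc, push_aux (as_eq car2 s r σ σ (by simp [h])) (a s σ),
      aa_self car1 s σ, mul_zero, neg_zero, mul_zero]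

include car1 car2 in
lemma L5 (r s : ZMod L) (σ : Bool) (h : r ≠ s) :
    (star (a r σ) * a s σ) * (star (a s σ) * a r σ)
      = star (a r σ) * a r σ - (star (a r σ) * a r σ) * (star (a s σ) * a s σ) := by
  rw [mul_assoc, ← mul_assoc (a s σ), as_self car2 s σ, sub_mul, one_mul,
      mul_assoc (star (a s σ)) (a s σ), aa_eq car1 s r σ σ, mul_neg, sub_neg_eq_add, mul_add,
      push_aux (sa_eq car2 s r σ σ (by simp [h])) (a s σ)]
  rw [mul_neg, ← sub_eq_add_neg, ← mul_assoc, ← mul_assoc]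

include car1 car2 in
lemma block (p q : ZMod L) (hpq : p ≠ q) :
    ⁅∑ σ : Bool, hop a p q σ,
      ⁅num a p true * num a p false + num a q true * num a q false,
        ∑ σ : Bool, hop a p q σ⁆⁆
      = -(((num a p true - num a q true) * (num a p false - num a q false) +
        shop a p q true * shop a p q false)
          + ((num a p true - num a q true) * (num a p false - num a q false) +
        shop a p q true * shop a p q false)
          + ((num a p true - num a q true) * (num a p false - num a q false) +
        shop a p q true * shop a p q false)
          + ((num a p true - num a q true) * (num a p false - num a q false) +
        shop a p q true * shop a p q false)) := by
  have hqp : q ≠ p := hpq.symm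
  have qc : ∀ x y z w : ZMod L,
      (star (a x false) * a y false) * (star (a z true) * a w true)
        = (star (a z true) * a w true) * (star (a x false) * a y false) :=
    fun x y z w => Q_comm car1 car2 x y z w false false true true (by simp) (by simp)
  rw [Fintype.sum_bool]
  simp only [hop, num, shop]
  exact core _ _ _ _ _ _ _ _
    (L1 car1 car2 p q true)
    (L4 car1 car2 p q true hqp)
    (L3 car1 car2 p q true hqp)
    (L2 car1 car2 p q true)
    (L3 car1 car2 q p true hpq)
    (L2 car1 car2 q p true)
    (L1 car1 car2 q p true)
    (L4 car1 car2 q p true hpq)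
    (L5 car1 car2 p q true hpq)
    ((L5 car1 car2 q p true hqp).trans (by rw [Q_comm car1 car2 q q p p true true true true (by simp [hqp]) (by simp [hpq])]))
    (L6 car1 car2 p q true hqp)
    (L6 car1 car2 q p true hpq)
    (L1 car1 car2 p p true)
    (L1 car1 car2 q q true)
    (Q_comm car1 car2 q q p p true true true true (by simp [hqp]) (by simp [hpq]))
    (L1 car1 car2 p q false)
    (L4 car1 car2 p q false hqp)
    (L3 car1 car2 p q false hqp)
    (L2 car1 car2 p q false)
    (L3 car1 car2 q p false hpq)
    (L2 car1 car2 q p false)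
    (L1 car1 car2 q p false)
    (L4 car1 car2 q p false hpq)
    (L5 car1 car2 p q false hpq)
    ((L5 car1 car2 q p false hqp).trans (by rw [Q_comm car1 car2 q q p p false false false false (by simp [hqp]) (by simp [hpq])]))
    (L6 car1 car2 p q false hqp)
    (L6 car1 car2 q p false hpq)
    (L1 car1 car2 p p false)
    (L1 car1 car2 q q false)
    (Q_comm car1 car2 q q p p false false false false (by simp [hqp]) (by simp [hpq]))
    (qc p q p q)
    (qc p q q p)
    (qc p q p p)
    (qc p q q q)
    (qc q p p q)
    (qc q p q p)
    (qc q p p p)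
    (qc q p q q)
    (qc p p p q)
    (qc p p q p)
    (qc p p p p)
    (qc p p q q)
    (qc q q p q)
    (qc q q q p)
    (qc q q p p)
    (qc q q q q)

include car1 car2 in
lemma main_sum (n : ℕ) (p q : ℕ → ZMod L)
    (hd : ∀ i ∈ Finset.range n, ∀ j ∈ Finset.range n, i ≠ j →
      p i ≠ p j ∧ p i ≠ q j ∧ q i ≠ p j ∧ q i ≠ q j)
    (hpq : ∀ i ∈ Finset.range n, p i ≠ q i) :
    ⁅∑ i ∈ Finset.range n, ∑ σ : Bool, hop a (p i) (q i) σ,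
      ⁅∑ i ∈ Finset.range n, (num a (p i) true * num a (p i) false +
          num a (q i) true * num a (q i) false),
        ∑ i ∈ Finset.range n, ∑ σ : Bool, hop a (p i) (q i) σ⁆⁆
      = ∑ i ∈ Finset.range n,
          -(((num a (p i) true - num a (q i) true) * (num a (p i) false - num a (q i) false) +
            shop a (p i) (q i) true * shop a (p i) (q i) false)
            + ((num a (p i) true - num a (q i) true) * (num a (p i) false - num a (q i) false) +
            shop a (p i) (q i) true * shop a (p i) (q i) false)
            + ((num a (p i) true - num a (q i) true) * (num a (p i) false - num a (q i) false) +
            shop a (p i) (q i) true * shop a (p i) (q i) false)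
            + ((num a (p i) true - num a (q i) true) * (num a (p i) false - num a (q i) false) +
            shop a (p i) (q i) true * shop a (p i) (q i) false)) := by
  have master : ∀ (x y z w : ZMod L) (σ τ : Bool), y ≠ z → w ≠ x →
      Commute (star (a x σ) * a y σ) (star (a z τ) * a w τ) := by
    intro x y z w σ τ h1 h2
    exact Q_comm car1 car2 x y z w σ σ τ τ (by simp [h1]) (by simp [h2])
  have commKK : ∀ i ∈ Finset.range n, ∀ j ∈ Finset.range n, i ≠ j →
      Commute (∑ σ : Bool, hop a (p i) (q i) σ) (∑ σ : Bool, hop a (p j) (q j) σ) := by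
    intro i hi j hj hij
    obtain ⟨h1, h2, h3, h4⟩ := hd i hi j hj hij
    refine Commute.sum_left _ _ _ fun σ _ => Commute.sum_right _ _ _ fun τ _ => ?_
    unfold hop
    exact ((master _ _ _ _ _ _ h3 h2.symm).add_right (master _ _ _ _ _ _ h4 h1.symm)).add_left
      ((master _ _ _ _ _ _ h1 h4.symm).add_right (master _ _ _ _ _ _ h2 h3.symm))
  have commDK : ∀ i ∈ Finset.range n, ∀ j ∈ Finset.range n, i ≠ j →
      Commute (num a (p j) true * num a (p j) false + num a (q j) true * num a (q j) false)
        (∑ σ : Bool, hop a (p i) (q i) σ) := by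
    intro i hi j hj hij
    obtain ⟨h1, h2, h3, h4⟩ := hd i hi j hj hij
    refine Commute.sum_right _ _ _ fun σ _ => ?_
    unfold hop num
    refine Commute.add_left (Commute.mul_left ?_ ?_) (Commute.mul_left ?_ ?_)
    · exact (master _ _ _ _ _ _ h1.symm h3).add_right (master _ _ _ _ _ _ h3.symm h1)
    · exact (master _ _ _ _ _ _ h1.symm h3).add_right (master _ _ _ _ _ _ h3.symm h1)
    · exact (master _ _ _ _ _ _ h2.symm h4).add_right (master _ _ _ _ _ _ h4.symm h2)
    · exact (master _ _ _ _ _ _ h2.symm h4).add_right (master _ _ _ _ _ _ h4.symm h2)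
  have hInner : ⁅∑ i ∈ Finset.range n, (num a (p i) true * num a (p i) false +
          num a (q i) true * num a (q i) false),
        ∑ i ∈ Finset.range n, ∑ σ : Bool, hop a (p i) (q i) σ⁆
      = ∑ j ∈ Finset.range n,
          ⁅num a (p j) true * num a (p j) false + num a (q j) true * num a (q j) false,
            ∑ σ : Bool, hop a (p j) (q j) σ⁆ := by
    rw [sum_lie_aux]
    refine Finset.sum_congr rfl fun j hj => ?_
    rw [lie_sum_aux]
    refine Finset.sum_eq_single_of_mem j hj fun i hi hij => ?_
    exact (commDK i hi j hj hij).lie_eq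
  rw [hInner, lie_sum_aux]
  refine Finset.sum_congr rfl fun j hj => ?_
  rw [sum_lie_aux]
  rw [Finset.sum_eq_single_of_mem j hj (fun i hi hij => ?_)]
  · exact block car1 car2 (p j) (q j) (hpq j hj)
  · have hcm : Commute (∑ σ : Bool, hop a (p i) (q i) σ)
        ⁅num a (p j) true * num a (p j) false + num a (q j) true * num a (q j) false,
          ∑ σ : Bool, hop a (p j) (q j) σ⁆ := by
      rw [Ring.lie_def]
      exact ((commDK i hi j hj hij).symm.mul_right (commKK i hi j hj hij)).sub_right
        ((commKK i hi j hj hij).mul_right (commDK i hi j hj hij).symm)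
    exact hcm.lie_eq


end CAR

/-- **Nested commutator `[H₁,[H₃,H₁]]` for the 1D Fermi-Hubbard Hamiltonian:**
`[H₁,[H₃,H₁]] = −4v²u Σ_{i∈Λ'} ((n_{i↑} − n_{i+1,↑})(n_{i↓} − n_{i+1,↓})
+ h̃_{i,i+1,↑}·h̃_{i,i+1,↓})`. -/
theorem nested_comm_FH1_FH3_FH1
    {E : Type*} [NormedAddCommGroup E] [InnerProductSpace ℂ E] [CompleteSpace E]
    {L : ℕ} (hL : Even L) (hL6 : 6 ≤ L)
    (a : ZMod L → Bool → E →L[ℂ] E)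
    (car1 : ∀ (i j : ZMod L) (σ τ : Bool), a i σ * a j τ + a j τ * a i σ = 0)
    (car2 : ∀ (i j : ZMod L) (σ τ : Bool),
      a i σ * star (a j τ) + star (a j τ) * a i σ = if i = j ∧ σ = τ then 1 else 0)
    (v u : ℝ) :
    ⁅FH1 a v, ⁅FH3 a u, FH1 a v⁆⁆
      = (-4 * (v : ℂ) ^ 2 * (u : ℂ)) • ∑ i ∈ Finset.range (L / 2),
          ((num a ((2 * i : ℕ) : ZMod L) true - num a (((2 * i : ℕ) : ZMod L) + 1) true) *
              (num a ((2 * i : ℕ) : ZMod L) false - num a (((2 * i : ℕ) : ZMod L) + 1) false) +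
            shop a ((2 * i : ℕ) : ZMod L) (((2 * i : ℕ) : ZMod L) + 1) true *
              shop a ((2 * i : ℕ) : ZMod L) (((2 * i : ℕ) : ZMod L) + 1) false) := by
  haveI : NeZero L := ⟨by omega⟩
  have hmod : L % 2 = 0 := Nat.even_iff.mp hL
  have cast_ne : ∀ {m k : ℕ}, m < L → k < L → m ≠ k → (m : ZMod L) ≠ (k : ZMod L) := by
    intro m k hm hk hne he
    exact hne (by rw [← ZMod.val_cast_of_lt (n := L) hm, ← ZMod.val_cast_of_lt (n := L) hk, he])
  have hq : ∀ i : ℕ, ((2 * i : ℕ) : ZMod L) + 1 = ((2 * i + 1 : ℕ) : ZMod L) := by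
    intro i; push_cast; ring
  have hd : ∀ i ∈ Finset.range (L / 2), ∀ j ∈ Finset.range (L / 2), i ≠ j →
      ((2 * i : ℕ) : ZMod L) ≠ ((2 * j : ℕ) : ZMod L) ∧
      ((2 * i : ℕ) : ZMod L) ≠ ((2 * j : ℕ) : ZMod L) + 1 ∧
      ((2 * i : ℕ) : ZMod L) + 1 ≠ ((2 * j : ℕ) : ZMod L) ∧
      ((2 * i : ℕ) : ZMod L) + 1 ≠ ((2 * j : ℕ) : ZMod L) + 1 := by
    intro i hi j hj hij
    simp only [Finset.mem_range] at hi hj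
    refine ⟨cast_ne (by omega) (by omega) (by omega), ?_, ?_, ?_⟩
    · rw [hq j]; exact cast_ne (by omega) (by omega) (by omega)
    · rw [hq i]; exact cast_ne (by omega) (by omega) (by omega)
    · rw [hq i, hq j]; exact cast_ne (by omega) (by omega) (by omega)
  have hpq : ∀ i ∈ Finset.range (L / 2), ((2 * i : ℕ) : ZMod L) ≠ ((2 * i : ℕ) : ZMod L) + 1 := by
    intro i hi
    simp only [Finset.mem_range] at hi
    rw [hq i]; exact cast_ne (by omega) (by omega) (by omega)
  have key := main_sum car1 car2 (L / 2) (fun i => ((2 * i : ℕ) : ZMod L))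
    (fun i => ((2 * i : ℕ) : ZMod L) + 1) hd hpq
  simp only [FH1, FH3, lie_smul, smul_lie,
    show ∀ (c : ℂ) (x y : E →L[ℂ] E), ⁅c • x, y⁆ = c • ⁅x, y⁆ from fun c x y => by
      simp only [Ring.lie_def, smul_mul_assoc, mul_smul_comm, smul_sub],
    show ∀ (c : ℂ) (x y : E →L[ℂ] E), ⁅x, c • y⁆ = c • ⁅x, y⁆ from fun c x y => by
      simp only [Ring.lie_def, smul_mul_assoc, mul_smul_comm, smul_sub]]
  rw [key]
  have h4 : ∀ z : E →L[ℂ] E, -(z + z + z + z) = (-4 : ℂ) • z := by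
    intro z
    rw [show ((-4 : ℂ)) = -(1 + 1 + 1 + 1 : ℂ) by norm_num]
    simp [add_smul, neg_smul, add_assoc]
  simp only [h4, ← Finset.smul_sum, smul_smul]
  congr 1
  ring
end
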